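/- For any positive integers q, k, and t, there exists a constant f(q, k, t) such that the following holds. Let D = (V, A) be a Steiner rooted k-arc-connected directed graph with root r and a set S ⊆ V − r of t terminals. Let 𝒞 be a family of pairwise vertex-disjoint directed cycles in D such that |𝒞| ≥ f(q, k, t) and each C ∈ 𝒞 is s-essential for every s ∈ S. Then there exist cycles C_1, …, C_q ∈ 𝒞 such that for every s ∈ S, either (C_1, …, C_q) or (C_q, …, C_1) forms an s-ordered sequence of directed cycles. -/

import Mathlib

/-- A finite loopless directed multigraph on vertex set `verts`; the arcs are
recorded as a multiset of ordered pairs `(tail, head)`, so that parallel arcs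
are allowed. -/
structure MDigraph (α : Type) where
  verts : Finset α
  arcs : Multiset (α × α)
  tail_mem : ∀ e ∈ arcs, e.1 ∈ verts
  head_mem : ∀ e ∈ arcs, e.2 ∈ verts
  loopless : ∀ e ∈ arcs, e.1 ≠ e.2

namespace MDigraph

variable {α : Type} [DecidableEq α]

/-- `p` is the vertex sequence of a directed path in `D` from `u` to `v`. -/
def IsDipath (D : MDigraph α) (p : List α) (u v : α) : Prop :=
  p.Nodup ∧ p.head? = some u ∧ p.getLast? = some v ∧
    (∀ x ∈ p, x ∈ D.verts) ∧ List.Chain' (fun x y => (x, y) ∈ D.arcs) p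

/-- The multiset of arcs traversed by a directed path given by its vertex sequence. -/
def pathArcs (p : List α) : Multiset (α × α) := ↑(p.zip p.tail)

/-- There exist `k` pairwise arc-disjoint directed paths from `u` to `v` in `D`
(each copy of an arc may be used by at most one of the paths). -/
def HasArcDisjointPaths (D : MDigraph α) (u v : α) (k : ℕ) : Prop :=
  ∃ P : Fin k → List α, (∀ i, D.IsDipath (P i) u v) ∧
    (∑ i : Fin k, pathArcs (P i)) ≤ D.arcs

/-- `D` is Steiner rooted `k`-arc-connected with root `r` and terminal set `S`:
for every terminal `s ∈ S` there are `k` pairwise arc-disjoint directed `r`-`s` paths. -/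
def SteinerRooted (D : MDigraph α) (r : α) (S : Finset α) (k : ℕ) : Prop :=
  ∀ s ∈ S, D.HasArcDisjointPaths r s k

/-- The in-degree of a vertex. -/
def inDeg (D : MDigraph α) (v : α) : ℕ := (D.arcs.filter (fun e => e.2 = v)).card

/-- The out-degree of a vertex. -/
def outDeg (D : MDigraph α) (v : α) : ℕ := (D.arcs.filter (fun e => e.1 = v)).card

/-- The number of arcs leaving the vertex set `X` (tail in `X`, head outside `X`). -/
def outDegOf (D : MDigraph α) (X : Finset α) : ℕ :=
  (D.arcs.filter (fun e => e.1 ∈ X ∧ e.2 ∉ X)).card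

/-- `D` is `3`-regular with respect to root `r`, terminal set `S` and connectivity `k`:
the root has in-degree `0` and out-degree `k`, every terminal has in-degree `k` and
out-degree `0`, and every other vertex has in-degree plus out-degree equal to `3`. -/
def ThreeRegular (D : MDigraph α) (r : α) (S : Finset α) (k : ℕ) : Prop :=
  D.inDeg r = 0 ∧ D.outDeg r = k ∧ (∀ s ∈ S, D.inDeg s = k ∧ D.outDeg s = 0) ∧
    ∀ v ∈ D.verts, v ≠ r → v ∉ S → D.inDeg v + D.outDeg v = 3

/-- Delete (one copy of) the arc `e` from `D`. -/
def delArc (D : MDigraph α) (e : α × α) : MDigraph α where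
  verts := D.verts
  arcs := D.arcs.erase e
  tail_mem := fun a ha => D.tail_mem a (Multiset.mem_of_mem_erase ha)
  head_mem := fun a ha => D.head_mem a (Multiset.mem_of_mem_erase ha)
  loopless := fun a ha => D.loopless a (Multiset.mem_of_mem_erase ha)

/-- `D` is minimally Steiner rooted `k`-arc-connected: it is Steiner rooted
`k`-arc-connected but deleting any arc destroys this property. -/
def MinSteinerRooted (D : MDigraph α) (r : α) (S : Finset α) (k : ℕ) : Prop :=
  D.SteinerRooted r S k ∧ ∀ e ∈ D.arcs, ¬ (D.delArc e).SteinerRooted r S k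

/-- `U` is a tight `s`-cut: `r ∈ U`, `s ∉ U`, and exactly `k` arcs leave `U`. -/
def IsTightCut (D : MDigraph α) (r s : α) (k : ℕ) (U : Finset α) : Prop :=
  r ∈ U ∧ s ∉ U ∧ D.outDegOf U = k

/-- The multiset of arcs of a directed cycle given by its vertex sequence. -/
def cycleArcs (c : List α) : Multiset (α × α) := ↑(c.zip (c.rotate 1))

/-- `c` is the vertex sequence of a directed cycle in `D`. -/
def IsDicycle (D : MDigraph α) (c : List α) : Prop :=
  c.Nodup ∧ 2 ≤ c.length ∧ cycleArcs c ≤ D.arcs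

end MDigraph

namespace MDigraph

variable {α : Type} [DecidableEq α]

/-- A vertex set `U` properly intersects a directed cycle (given by its vertex
sequence `c`) if both `V(c) ∩ U` and `V(c) \ U` are nonempty. -/
def ProperlyIntersects (U : Finset α) (c : List α) : Prop :=
  (∃ x ∈ c, x ∈ U) ∧ ∃ x ∈ c, x ∉ U

/-- A directed cycle `c` is `s`-essential if some tight `s`-cut properly intersects it. -/
def IsEssential (D : MDigraph α) (r s : α) (k : ℕ) (c : List α) : Prop :=
  ∃ U : Finset α, D.IsTightCut r s k U ∧ ProperlyIntersects U c

/-- The sequence `C 0, …, C (q-1)` of directed cycles is `s`-ordered: there are tight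
`s`-cuts `U i` such that `V(C i) ⊆ U j` for `i < j`, `V(C i) ∩ U j = ∅` for `i > j`,
and `U i` properly intersects `C i` for every `i`. -/
def IsOrderedSeq (D : MDigraph α) (r s : α) (k : ℕ) {q : ℕ} (C : Fin q → List α) : Prop :=
  ∃ U : Fin q → Finset α, (∀ i, D.IsTightCut r s k (U i)) ∧
    (∀ i j : Fin q, i < j → ∀ x ∈ C i, x ∈ U j) ∧
    (∀ i j : Fin q, j < i → ∀ x ∈ C i, x ∉ U j) ∧
    ∀ i, ProperlyIntersects (U i) (C i)

end MDigraph


section Stage1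
open Multiset in
lemma countP_pair_le {β : Type*} (s : Multiset β) (p1 p2 p3 p4 : β → Prop)
    [DecidablePred p1] [DecidablePred p2] [DecidablePred p3] [DecidablePred p4]
    (h : ∀ e ∈ s, (if p3 e then 1 else 0) + (if p4 e then 1 else 0) ≤
      (if p1 e then 1 else 0) + (if p2 e then 1 else 0)) :
    s.countP p3 + s.countP p4 ≤ s.countP p1 + s.countP p2 := by
  induction s using Multiset.induction with
  | empty => simp
  | cons a s ih =>
    have h1 := h a (Multiset.mem_cons_self a s)
    have h2 := ih (fun e he => h e (Multiset.mem_cons_of_mem he))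
    simp only [Multiset.countP_cons]
    omega

namespace MDigraph
variable {α : Type} [DecidableEq α]

lemma outDegOf_eq_countP (D : MDigraph α) (X : Finset α) :
    D.outDegOf X = D.arcs.countP (fun e => e.1 ∈ X ∧ e.2 ∉ X) := by
  simp [outDegOf, Multiset.countP_eq_card_filter]

lemma outDegOf_submod (D : MDigraph α) (X Y : Finset α) :
    D.outDegOf (X ∩ Y) + D.outDegOf (X ∪ Y) ≤ D.outDegOf X + D.outDegOf Y := by
  simp only [outDegOf_eq_countP]
  refine countP_pair_le _ _ _ _ _ ?_
  intro e _
  by_cases h1 : e.1 ∈ X <;> by_cases h2 : e.1 ∈ Y <;> by_cases h3 : e.2 ∈ X <;>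
    by_cases h4 : e.2 ∈ Y <;>
    simp [Finset.mem_inter, Finset.mem_union, h1, h2, h3, h4]

lemma exists_crossing_pair (U : Finset α) :
    ∀ (p : List α) (u v : α), p.head? = some u → p.getLast? = some v → u ∈ U → v ∉ U →
      ∃ e ∈ p.zip p.tail, e.1 ∈ U ∧ e.2 ∉ U := by
  intro p
  induction p with
  | nil => intro u v hh; simp at hh
  | cons x rest ih =>
    intro u v hh hl hu hv
    simp only [List.head?_cons, Option.some.injEq] at hh
    subst hh
    cases rest with
    | nil =>
      simp only [List.getLast?_singleton, Option.some.injEq] at hl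
      subst hl; exact absurd hu hv
    | cons y rest' =>
      by_cases hy : y ∈ U
      · obtain ⟨e, he, h1, h2⟩ := ih y v rfl (by rw [← hl, List.getLast?_cons_cons]) hy hv
        refine ⟨e, ?_, h1, h2⟩
        simp only [List.tail_cons, List.zip_cons_cons]
        exact List.mem_cons_of_mem _ he
      · exact ⟨(x, y), by simp [List.zip_cons_cons], hu, hy⟩

lemma filter_finsum {β : Type*} [DecidableEq β] {ι : Type*} (s : Finset ι) (f : ι → Multiset β)
    (p : β → Prop) [DecidablePred p] :
    (∑ i ∈ s, f i).filter p = ∑ i ∈ s, (f i).filter p := by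
  induction s using Finset.cons_induction with
  | empty => simp
  | cons a s ha ih => simp [Finset.sum_cons, Multiset.filter_add, ih]

lemma le_outDegOf_of_hasPaths (D : MDigraph α) {r s : α} {k : ℕ}
    (h : D.HasArcDisjointPaths r s k) {U : Finset α} (hr : r ∈ U) (hs : s ∉ U) :
    k ≤ D.outDegOf U := by
  classical
  obtain ⟨P, hP, hle⟩ := h
  set pr : α × α → Prop := fun e => e.1 ∈ U ∧ e.2 ∉ U with hpr
  have hsum : ((∑ i : Fin k, pathArcs (P i)).filter pr).card ≤ (D.arcs.filter pr).card :=
    Multiset.card_le_card (Multiset.filter_le_filter _ hle)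
  have hone : ∀ i : Fin k, 1 ≤ ((pathArcs (P i)).filter pr).card := by
    intro i
    obtain ⟨hnd, hh, hl, _, _⟩ := hP i
    obtain ⟨e, he, h1, h2⟩ := exists_crossing_pair U (P i) r s hh hl hr hs
    have : e ∈ (pathArcs (P i)).filter pr := Multiset.mem_filter.2 ⟨by exact he, ⟨h1, h2⟩⟩
    exact Multiset.card_pos_iff_exists_mem.2 ⟨e, this⟩
  have : (k : ℕ) ≤ ∑ i : Fin k, ((pathArcs (P i)).filter pr).card := by
    calc (k : ℕ) = ∑ _i : Fin k, 1 := by simp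
    _ ≤ _ := Finset.sum_le_sum (fun i _ => hone i)
  rw [filter_finsum] at hsum
  have hcs : Multiset.card (∑ i : Fin k, Multiset.filter pr (pathArcs (P i)))
      = ∑ i : Fin k, Multiset.card (Multiset.filter pr (pathArcs (P i))) := by
    classical
    induction (Finset.univ : Finset (Fin k)) using Finset.cons_induction with
    | empty => simp
    | cons a t ha ih => simp [Finset.sum_cons, ih]
  rw [hcs] at hsum
  exact le_trans this hsum

lemma tight_inter_union (D : MDigraph α) {r s : α} {k : ℕ}
    (h : D.HasArcDisjointPaths r s k) {U V : Finset α}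
    (hU : D.IsTightCut r s k U) (hV : D.IsTightCut r s k V) :
    D.IsTightCut r s k (U ∩ V) ∧ D.IsTightCut r s k (U ∪ V) := by
  obtain ⟨hrU, hsU, hdU⟩ := hU
  obtain ⟨hrV, hsV, hdV⟩ := hV
  have h1 : k ≤ D.outDegOf (U ∩ V) :=
    le_outDegOf_of_hasPaths D h (Finset.mem_inter.2 ⟨hrU, hrV⟩)
      (fun hc => hsU (Finset.mem_inter.1 hc).1)
  have h2 : k ≤ D.outDegOf (U ∪ V) :=
    le_outDegOf_of_hasPaths D h (Finset.mem_union_left _ hrU)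
      (fun hc => (Finset.mem_union.1 hc).elim hsU hsV)
  have h3 := D.outDegOf_submod U V
  refine ⟨⟨Finset.mem_inter.2 ⟨hrU, hrV⟩, fun hc => hsU (Finset.mem_inter.1 hc).1, by omega⟩,
    ⟨Finset.mem_union_left _ hrU, fun hc => (Finset.mem_union.1 hc).elim hsU hsV, by omega⟩⟩

end MDigraph
end Stage1

section Stage2
namespace MDigraph
variable {α : Type} [DecidableEq α]

/-- The `i`-th vertex of a cyclic list, indices mod length. -/
def cyc (c : List α) (h : 0 < c.length) (i : ℕ) : α :=
  c.get ⟨i % c.length, Nat.mod_lt _ h⟩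

omit [DecidableEq α] in
lemma cyc_mem (c : List α) (h : 0 < c.length) (i : ℕ) : cyc c h i ∈ c :=
  List.get_mem _ _

omit [DecidableEq α] in
lemma cyc_eq_of_lt (c : List α) (h : 0 < c.length) {i : ℕ} (hi : i < c.length) :
    cyc c h i = c.get ⟨i, hi⟩ := by
  unfold cyc
  congr 1
  exact Fin.ext (Nat.mod_eq_of_lt hi)

omit [DecidableEq α] in
lemma cyc_pair_mem (c : List α) (h : 0 < c.length) (i : ℕ) :
    (cyc c h i, cyc c h (i + 1)) ∈ cycleArcs c := by
  set n := c.length with hn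
  have hj : i % n < n := Nat.mod_lt _ h
  have hz : i % n < (c.zip (c.rotate 1)).length := by
    rw [List.length_zip, List.length_rotate, Nat.min_self]; exact hj
  have hr : i % n < (c.rotate 1).length := by rw [List.length_rotate]; exact hj
  have hget : (c.zip (c.rotate 1)).get ⟨i % n, hz⟩ =
      (c.get ⟨i % n, hj⟩, (c.rotate 1).get ⟨i % n, hr⟩) := by
    simp [List.get_eq_getElem, List.getElem_zip]
  have hrot : (c.rotate 1).get ⟨i % n, hr⟩ = cyc c h (i + 1) := by
    rw [List.get_rotate]
    unfold cyc
    congr 1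
    exact Fin.ext (by simp only [← hn]; rw [Nat.mod_add_mod])
  have hmem : (c.zip (c.rotate 1)).get ⟨i % n, hz⟩ ∈ c.zip (c.rotate 1) := List.get_mem _ _
  rw [hget, hrot] at hmem
  have : cyc c h i = c.get ⟨i % n, hj⟩ := rfl
  rw [← this] at hmem
  exact hmem

lemma mem_verts_of_mem_dicycle (D : MDigraph α) {c : List α} (hc : D.IsDicycle c)
    {x : α} (hx : x ∈ c) : x ∈ D.verts := by
  have h : 0 < c.length := List.length_pos_iff.2 (List.ne_nil_of_mem hx)
  obtain ⟨i, hi, hxi⟩ := List.mem_iff_getElem.1 hx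
  have hpair := cyc_pair_mem c h i
  have hmem := Multiset.mem_of_le hc.2.2 hpair
  have : cyc c h i = x := by rw [cyc_eq_of_lt c h hi, List.get_eq_getElem]; exact hxi
  rw [← this]
  exact D.tail_mem _ hmem

omit [DecidableEq α] in
lemma cycle_crossing (U : Finset α) (c : List α)
    (hx : ∃ x ∈ c, x ∈ U) (hy : ∃ y ∈ c, y ∉ U) :
    ∃ e ∈ cycleArcs c, e.1 ∈ U ∧ e.2 ∉ U := by
  by_contra hcon
  push_neg at hcon
  obtain ⟨x, hxc, hxU⟩ := hx
  have h : 0 < c.length := List.length_pos_iff.2 (List.ne_nil_of_mem hxc)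
  obtain ⟨i0, hi0, hx0⟩ := List.mem_iff_getElem.1 hxc
  have step : ∀ i : ℕ, cyc c h i ∈ U → cyc c h (i + 1) ∈ U := by
    intro i hiU
    exact hcon _ (cyc_pair_mem c h i) hiU
  have all : ∀ d : ℕ, cyc c h (i0 + d) ∈ U := by
    intro d
    induction d with
    | zero =>
      have : cyc c h (i0 + 0) = x := by
        rw [Nat.add_zero, cyc_eq_of_lt c h hi0, List.get_eq_getElem]; exact hx0
      rw [this]; exact hxU
    | succ d ih => exact (by rw [← Nat.add_assoc]; exact step _ ih)
  obtain ⟨y, hyc, hyU⟩ := hy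
  obtain ⟨j, hj, hyj⟩ := List.mem_iff_getElem.1 hyc
  have := all (j + c.length - i0)
  have harith : cyc c h (i0 + (j + c.length - i0)) = y := by
    have h1 : i0 + (j + c.length - i0) = j + c.length := by omega
    rw [h1]
    unfold cyc
    have h2 : (j + c.length) % c.length = j := by
      rw [Nat.add_mod_right, Nat.mod_eq_of_lt hj]
    rw [List.get_eq_getElem]
    simp only [h2]
    exact hyj
  rw [harith] at this
  exact hyU this

omit [DecidableEq α] in
lemma fst_mem_of_mem_cycleArcs {c : List α} {e : α × α} (he : e ∈ cycleArcs c) : e.1 ∈ c := by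
  have : (e.1, e.2) ∈ c.zip (c.rotate 1) := by simpa [cycleArcs] using he
  exact (List.of_mem_zip this).1

lemma add_le_of_disjoint {β : Type*} [DecidableEq β] {s u t : Multiset β}
    (hs : s ≤ t) (hu : u ≤ t) (hd : ∀ a ∈ s, a ∉ u) : s + u ≤ t := by
  rw [Multiset.le_iff_count]
  intro a
  rw [Multiset.count_add]
  by_cases ha : a ∈ s
  · have : u.count a = 0 := Multiset.count_eq_zero.2 (hd a ha)
    rw [this, Nat.add_zero]
    exact Multiset.le_iff_count.1 hs a
  · have : s.count a = 0 := Multiset.count_eq_zero.2 ha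
    rw [this, Nat.zero_add]
    exact Multiset.le_iff_count.1 hu a

lemma sum_cycleArcs_le (D : MDigraph α) {ι : Type*} [DecidableEq ι] (F : Finset ι)
    (C : ι → List α) (hC : ∀ i ∈ F, cycleArcs (C i) ≤ D.arcs)
    (hdisj : ∀ i ∈ F, ∀ j ∈ F, i ≠ j → ∀ x ∈ C i, x ∉ C j) :
    (∑ i ∈ F, cycleArcs (C i)) ≤ D.arcs := by
  induction F using Finset.cons_induction with
  | empty => simp
  | cons a F ha ih =>
    rw [Finset.sum_cons]
    have h1 : cycleArcs (C a) ≤ D.arcs := hC a (Finset.mem_cons_self a F)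
    have h2 : (∑ i ∈ F, cycleArcs (C i)) ≤ D.arcs := by
      refine ih (fun i hi => hC i (Finset.mem_cons_of_mem hi)) ?_
      intro i hi j hj hij
      exact hdisj i (Finset.mem_cons_of_mem hi) j (Finset.mem_cons_of_mem hj) hij
    refine add_le_of_disjoint h1 h2 ?_
    intro e he hmem
    obtain ⟨j, hj, hmemj⟩ := Multiset.mem_sum.1 hmem
    have h3 : e.1 ∈ C a := fst_mem_of_mem_cycleArcs he
    have h4 : e.1 ∈ C j := fst_mem_of_mem_cycleArcs hmemj
    exact hdisj a (Finset.mem_cons_self a F) j (Finset.mem_cons_of_mem hj)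
      (fun h => ha (h ▸ hj)) _ h3 h4

lemma card_splits_le (D : MDigraph α) {r s : α} {k : ℕ} {U : Finset α}
    (hU : D.IsTightCut r s k U) {ι : Type*} [DecidableEq ι] (F : Finset ι) (C : ι → List α)
    (hcyc : ∀ i ∈ F, D.IsDicycle (C i))
    (hdisj : ∀ i ∈ F, ∀ j ∈ F, i ≠ j → ∀ x ∈ C i, x ∉ C j)
    (hsplit : ∀ i ∈ F, ProperlyIntersects U (C i)) :
    F.card ≤ k := by
  classical
  set pr : α × α → Prop := fun e => e.1 ∈ U ∧ e.2 ∉ U with hpr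
  have hsum : (∑ i ∈ F, cycleArcs (C i)) ≤ D.arcs :=
    sum_cycleArcs_le D F C (fun i hi => (hcyc i hi).2.2) hdisj
  have hfil : ((∑ i ∈ F, cycleArcs (C i)).filter pr).card ≤ (D.arcs.filter pr).card :=
    Multiset.card_le_card (Multiset.filter_le_filter _ hsum)
  rw [filter_finsum] at hfil
  have hcs : Multiset.card (∑ i ∈ F, Multiset.filter pr (cycleArcs (C i)))
      = ∑ i ∈ F, Multiset.card (Multiset.filter pr (cycleArcs (C i))) := by
    induction F using Finset.cons_induction with
    | empty => simp
    | cons a t ha ih => simp [Finset.sum_cons, ih]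
  rw [hcs] at hfil
  have hone : ∀ i ∈ F, 1 ≤ Multiset.card (Multiset.filter pr (cycleArcs (C i))) := by
    intro i hi
    obtain ⟨e, he, h1, h2⟩ := cycle_crossing U (C i) (hsplit i hi).1 (hsplit i hi).2
    exact Multiset.card_pos_iff_exists_mem.2 ⟨e, Multiset.mem_filter.2 ⟨he, ⟨h1, h2⟩⟩⟩
  have hsum2 : F.card ≤ ∑ i ∈ F, Multiset.card (Multiset.filter pr (cycleArcs (C i))) := by
    calc F.card = ∑ _i ∈ F, 1 := by simp
    _ ≤ _ := Finset.sum_le_sum hone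
  have hout : (D.arcs.filter pr).card = k := hU.2.2
  omega

end MDigraph
end Stage2

section Stage3
set_option linter.unusedSectionVars false
namespace MDigraph
variable {α : Type} [DecidableEq α]

instance (D : MDigraph α) (r s : α) (k : ℕ) (U : Finset α) :
    Decidable (D.IsTightCut r s k U) :=
  decidable_of_iff (r ∈ U ∧ s ∉ U ∧ D.outDegOf U = k) Iff.rfl

/-- The family of tight `s`-cuts contained in the vertex set. -/
def tightSet (D : MDigraph α) (r s : α) (k : ℕ) : Finset (Finset α) :=
  D.verts.powerset.filter (fun U => D.IsTightCut r s k U)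

lemma mem_tightSet {D : MDigraph α} {r s : α} {k : ℕ} {U : Finset α} :
    U ∈ D.tightSet r s k ↔ U ⊆ D.verts ∧ D.IsTightCut r s k U := by
  simp [tightSet, Finset.mem_filter, Finset.mem_powerset]

lemma outDegOf_inter_verts (D : MDigraph α) (U : Finset α) :
    D.outDegOf (U ∩ D.verts) = D.outDegOf U := by
  unfold outDegOf
  congr 1
  refine Multiset.filter_congr ?_
  intro e he
  have h1 := D.tail_mem e he
  have h2 := D.head_mem e he
  simp [Finset.mem_inter, h1, h2]

lemma tight_inter_verts {D : MDigraph α} {r s : α} {k : ℕ} {U : Finset α}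
    (hU : D.IsTightCut r s k U) (hr : r ∈ D.verts) :
    (U ∩ D.verts) ∈ D.tightSet r s k := by
  refine mem_tightSet.2 ⟨Finset.inter_subset_right, ⟨Finset.mem_inter.2 ⟨hU.1, hr⟩,
    fun hc => hU.2.1 (Finset.mem_inter.1 hc).1, ?_⟩⟩
  rw [outDegOf_inter_verts]
  exact hU.2.2

lemma inf'_mem_tightSet (D : MDigraph α) {r s : α} {k : ℕ}
    (hpaths : D.HasArcDisjointPaths r s k)
    {𝒜 : Finset (Finset α)} (hne : 𝒜.Nonempty) (h𝒜 : 𝒜 ⊆ D.tightSet r s k) :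
    𝒜.inf' hne id ∈ D.tightSet r s k := by
  induction hne using Finset.Nonempty.cons_induction
  next a => simpa using h𝒜 (by simp)
  next a t ha htne ih =>
    rw [Finset.inf'_cons (H := htne)]
    have h1 : a ∈ D.tightSet r s k := h𝒜 (Finset.mem_cons_self a t)
    have h2 := ih (fun x hx => h𝒜 (Finset.mem_cons_of_mem hx))
    have h3 := (tight_inter_union D hpaths (mem_tightSet.1 h1).2 (mem_tightSet.1 h2).2).1
    exact mem_tightSet.2 ⟨le_trans (by exact inf_le_left) (mem_tightSet.1 h1).1, h3⟩

lemma sup'_mem_tightSet (D : MDigraph α) {r s : α} {k : ℕ}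
    (hpaths : D.HasArcDisjointPaths r s k)
    {𝒜 : Finset (Finset α)} (hne : 𝒜.Nonempty) (h𝒜 : 𝒜 ⊆ D.tightSet r s k) :
    𝒜.sup' hne id ∈ D.tightSet r s k := by
  induction hne using Finset.Nonempty.cons_induction
  next a => simpa using h𝒜 (by simp)
  next a t ha htne ih =>
    rw [Finset.sup'_cons (H := htne)]
    have h1 : a ∈ D.tightSet r s k := h𝒜 (Finset.mem_cons_self a t)
    have h2 := ih (fun x hx => h𝒜 (Finset.mem_cons_of_mem hx))
    have h3 := (tight_inter_union D hpaths (mem_tightSet.1 h1).2 (mem_tightSet.1 h2).2).2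
    refine mem_tightSet.2 ⟨?_, h3⟩
    exact sup_le (mem_tightSet.1 h1).1 (mem_tightSet.1 h2).1

/-- Existence of a saturated chain in any finite family of finite sets with a top. -/
lemma exists_saturated_chain_aux {β : Type*} [DecidableEq β] (𝒯 : Finset (Finset β)) (X : Finset β)
    (hTX : ∀ T' ∈ 𝒯, T' ⊆ X) (hXmem : X ∈ 𝒯) :
    ∀ T ∈ 𝒯, ∃ l : List (Finset β), l ≠ [] ∧ l.head? = some T ∧ l.getLast? = some X ∧
      (∀ Z ∈ l, Z ∈ 𝒯) ∧
      List.Chain' (fun A B => A ⊂ B ∧ ¬ ∃ Z ∈ 𝒯, A ⊂ Z ∧ Z ⊂ B) l := by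
  suffices h : ∀ (n : ℕ) (T : Finset β), T ∈ 𝒯 → X.card - T.card ≤ n →
      ∃ l : List (Finset β), l ≠ [] ∧ l.head? = some T ∧ l.getLast? = some X ∧
        (∀ Z ∈ l, Z ∈ 𝒯) ∧
        List.Chain' (fun A B => A ⊂ B ∧ ¬ ∃ Z ∈ 𝒯, A ⊂ Z ∧ Z ⊂ B) l by
    exact fun T hT => h _ T hT (le_refl _)
  intro n
  induction n with
  | zero =>
    intro T hT hn
    have hsub : T ⊆ X := hTX T hT
    have hcard : X.card ≤ T.card := by
      have := Finset.card_le_card hsub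
      omega
    obtain rfl : T = X := Finset.eq_of_subset_of_card_le hsub hcard
    exact ⟨[T], by simp, by simp, by simp, by simpa using hT, List.isChain_singleton _⟩
  | succ n ih =>
    intro T hT hn
    by_cases heq : T = X
    · subst heq
      exact ⟨[T], by simp, by simp, by simp, by simpa using hT, List.isChain_singleton _⟩
    · have hsub : T ⊂ X := lt_of_le_of_ne (Finset.le_iff_subset.2 (hTX T hT)) heq
      have h𝒮ne : (𝒯.filter (fun Z => T ⊂ Z)).Nonempty :=
        ⟨X, Finset.mem_filter.2 ⟨hXmem, hsub⟩⟩
      obtain ⟨U₀, hU₀mem, hU₀min⟩ :=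
        Finset.exists_min_image (𝒯.filter (fun Z => T ⊂ Z)) Finset.card h𝒮ne
      have hU₀𝒯 : U₀ ∈ 𝒯 := (Finset.mem_filter.1 hU₀mem).1
      have hTU₀ : T ⊂ U₀ := (Finset.mem_filter.1 hU₀mem).2
      have hcard : X.card - U₀.card ≤ n := by
        have h1 : T.card < U₀.card := Finset.card_lt_card hTU₀
        have h2 : U₀.card ≤ X.card := Finset.card_le_card (hTX _ hU₀𝒯)
        omega
      obtain ⟨l', hl'ne, hl'head, hl'last, hl'mem, hl'chain⟩ := ih U₀ hU₀𝒯 hcard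
      refine ⟨T :: l', by simp, by simp, ?_, ?_, ?_⟩
      · cases l' with
        | nil => exact absurd rfl hl'ne
        | cons B l'' => rw [List.getLast?_cons_cons]; exact hl'last
      · intro Z hZ
        rcases List.mem_cons.1 hZ with rfl | h
        · exact hT
        · exact hl'mem _ h
      · refine List.isChain_cons.2 ⟨?_, hl'chain⟩
        intro B hB
        rw [hl'head] at hB
        obtain rfl : U₀ = B := by simpa using hB
        refine ⟨hTU₀, ?_⟩
        rintro ⟨Z, hZ𝒯, h1, h2⟩
        have := hU₀min Z (Finset.mem_filter.2 ⟨hZ𝒯, h1⟩)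
        exact absurd this (Nat.not_le.2 (Finset.card_lt_card h2))

end MDigraph
end Stage3

section Stage4

/-- Greedy selection of a "separated chain" from a family of intervals of bounded depth. -/
lemma exists_interval_chain {ι : Type*} [DecidableEq ι] (k : ℕ) (a b : ι → ℕ) :
    ∀ (q : ℕ) (F : Finset ι), (∀ p : ℕ, (F.filter (fun i => a i ≤ p ∧ p ≤ b i)).card ≤ k) →
      q * (k + 1) ≤ F.card →
      ∃ f : Fin q → ι, (∀ x, f x ∈ F) ∧ (∀ x y : Fin q, x < y → b (f x) < a (f y)) := by
  intro q
  induction q with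
  | zero => exact fun F _ _ => ⟨Fin.elim0, fun x => x.elim0, fun x => x.elim0⟩
  | succ q ih =>
    intro F hdepth hcard
    have hFne : F.Nonempty := by
      rw [← Finset.card_pos]
      have h1 : 1 ≤ (q + 1) * (k + 1) := Nat.one_le_iff_ne_zero.2 (by positivity)
      omega
    obtain ⟨i₀, hi₀F, hi₀min⟩ := Finset.exists_min_image F b hFne
    have hsplit : F.card ≤ (F.filter (fun j => b i₀ < a j)).card + (k + 1) := by
      have hsub : F ⊆ F.filter (fun j => b i₀ < a j) ∪
          F.filter (fun j => a j ≤ b i₀ ∧ b i₀ ≤ b j) := by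
        intro j hj
        rcases Nat.lt_or_ge (b i₀) (a j) with h | h
        · exact Finset.mem_union_left _ (Finset.mem_filter.2 ⟨hj, h⟩)
        · exact Finset.mem_union_right _ (Finset.mem_filter.2 ⟨hj, h, hi₀min j hj⟩)
      calc F.card ≤ _ := Finset.card_le_card hsub
        _ ≤ (F.filter (fun j => b i₀ < a j)).card
            + (F.filter (fun j => a j ≤ b i₀ ∧ b i₀ ≤ b j)).card := Finset.card_union_le _ _
        _ ≤ (F.filter (fun j => b i₀ < a j)).card + (k + 1) := by
            have := hdepth (b i₀)
            omega
    have hcard' : q * (k + 1) ≤ (F.filter (fun j => b i₀ < a j)).card := by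
      have h2 : (q + 1) * (k + 1) = q * (k + 1) + (k + 1) := by ring
      omega
    have hdepth' : ∀ p : ℕ,
        ((F.filter (fun j => b i₀ < a j)).filter (fun i => a i ≤ p ∧ p ≤ b i)).card ≤ k := by
      intro p
      refine le_trans (Finset.card_le_card ?_) (hdepth p)
      intro j hj
      have h1 := Finset.mem_filter.1 hj
      have h2 := Finset.mem_filter.1 h1.1
      exact Finset.mem_filter.2 ⟨h2.1, h1.2⟩
    obtain ⟨f', hf'mem, hf'chain⟩ := ih _ hdepth' hcard'
    refine ⟨Fin.cases i₀ f', ?_, ?_⟩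
    · intro x
      induction x using Fin.cases with
      | zero => simpa using hi₀F
      | succ x =>
        simp only [Fin.cases_succ]
        exact Finset.mem_of_mem_filter _ (hf'mem x)
    · intro x y hxy
      induction y using Fin.cases with
      | zero => exact absurd hxy (Fin.not_lt_zero x).elim
      | succ y =>
        induction x using Fin.cases with
        | zero =>
          simp only [Fin.cases_zero, Fin.cases_succ]
          exact (Finset.mem_filter.1 (hf'mem y)).2
        | succ x =>
          simp only [Fin.cases_succ]
          exact hf'chain x y (Fin.succ_lt_succ_iff.1 hxy)

/-- Erdős–Szekeres-type lemma with an easy exponential bound. -/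
lemma exists_mono_or_anti {β : Type*} [LinearOrder β] :
    ∀ (c a b n : ℕ) (σ : Fin n → β), Function.Injective σ → a + b ≤ c → 2 ^ (a + b) ≤ n →
      (∃ τ : Fin a → Fin n, StrictMono τ ∧ StrictMono (σ ∘ τ)) ∨
      (∃ τ : Fin b → Fin n, StrictMono τ ∧ StrictAnti (σ ∘ τ)) := by
  intro c
  induction c with
  | zero =>
    intro a b n σ _ hab _
    obtain rfl : a = 0 := by omega
    exact Or.inl ⟨Fin.elim0, fun x => x.elim0, fun x => x.elim0⟩
  | succ c ih =>
    intro a b n σ hinj hab hn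
    match a, b with
    | 0, b => exact Or.inl ⟨Fin.elim0, fun x => x.elim0, fun x => x.elim0⟩
    | a + 1, 0 => exact Or.inr ⟨Fin.elim0, fun x => x.elim0, fun x => x.elim0⟩
    | a + 1, b + 1 =>
      have hnpos : 0 < n := lt_of_lt_of_le (Nat.two_pow_pos _) hn
      set i₀ : Fin n := ⟨0, hnpos⟩ with hi₀
      have hi₀le : ∀ i : Fin n, i₀ ≤ i := fun i => by
        rw [Fin.le_def]
        exact Nat.zero_le _
      set A := Finset.univ.filter (fun i : Fin n => σ i₀ < σ i) with hA
      set B := Finset.univ.filter (fun i : Fin n => σ i < σ i₀) with hB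
      have hcover : n - 1 ≤ A.card + B.card := by
        have hsub : Finset.univ.erase i₀ ⊆ A ∪ B := by
          intro i hi
          have hne : i ≠ i₀ := Finset.ne_of_mem_erase hi
          rcases lt_or_gt_of_ne (fun h : σ i = σ i₀ => hne (hinj h)) with h | h
          · exact Finset.mem_union_right _ (Finset.mem_filter.2 ⟨Finset.mem_univ _, h⟩)
          · exact Finset.mem_union_left _ (Finset.mem_filter.2 ⟨Finset.mem_univ _, h⟩)
        calc n - 1 = (Finset.univ.erase i₀).card := by
              rw [Finset.card_erase_of_mem (Finset.mem_univ _), Finset.card_univ,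
                Fintype.card_fin]
          _ ≤ (A ∪ B).card := Finset.card_le_card hsub
          _ ≤ A.card + B.card := Finset.card_union_le _ _
      have hi₀lt : ∀ {i : Fin n}, σ i₀ ≠ σ i → i₀ < i := by
        intro i hne
        exact lt_of_le_of_ne (hi₀le i) (fun h => hne (congrArg σ h))
      have hsum : 2 ^ (a + (b + 1)) ≤ A.card ∨ 2 ^ ((a + 1) + b) ≤ B.card := by
        by_contra hcon
        push_neg at hcon
        have he1 : (a + 1) + (b + 1) = (a + (b + 1)) + 1 := by omega
        have he2 : (a + 1) + (b + 1) = ((a + 1) + b) + 1 := by omega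
        have h1 : 2 ^ ((a + 1) + (b + 1)) = 2 ^ (a + (b + 1)) + 2 ^ ((a + 1) + b) := by
          rw [he1, pow_succ]
          have : (a + (b+1)) = ((a+1) + b) := by omega
          rw [this]
          ring
        omega
      rcases hsum with hAc | hBc
      · -- many elements above the pivot
        set e := A.orderIsoOfFin rfl with he
        have hσ' : Function.Injective (fun x : Fin A.card => σ (e x).1) := by
          intro x y hxy
          exact e.injective (Subtype.ext (hinj hxy))
        have hIH := ih a (b + 1) A.card _ hσ' (by omega) hAc
        rcases hIH with ⟨τ', hτ'm, hτ'inc⟩ | ⟨τ'', hτ''m, hτ''anti⟩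
        · -- prepend pivot
          refine Or.inl ⟨Fin.cases i₀ (fun x => (e (τ' x)).1), ?_, ?_⟩
          · intro x y hxy
            induction y using Fin.cases with
            | zero => exact absurd hxy (Fin.not_lt_zero x).elim
            | succ y =>
              induction x using Fin.cases with
              | zero =>
                simp only [Fin.cases_zero, Fin.cases_succ]
                exact hi₀lt (ne_of_lt (Finset.mem_filter.1 (e (τ' y)).2).2)
              | succ x =>
                simp only [Fin.cases_succ]
                exact e.strictMono (hτ'm (Fin.succ_lt_succ_iff.1 hxy))
          · intro x y hxy
            induction y using Fin.cases with
            | zero => exact absurd hxy (Fin.not_lt_zero x).elim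
            | succ y =>
              induction x using Fin.cases with
              | zero =>
                simp only [Function.comp_apply, Fin.cases_zero, Fin.cases_succ]
                exact (Finset.mem_filter.1 (e (τ' y)).2).2
              | succ x =>
                simp only [Function.comp_apply, Fin.cases_succ]
                exact hτ'inc (Fin.succ_lt_succ_iff.1 hxy)
        · -- an antitone subsequence inside A lifts directly
          refine Or.inr ⟨fun x => (e (τ'' x)).1, ?_, ?_⟩
          · intro x y hxy
            exact e.strictMono (hτ''m hxy)
          · intro x y hxy
            exact hτ''anti hxy
      · -- many elements below the pivot
        set e := B.orderIsoOfFin rfl with he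
        have hσ' : Function.Injective (fun x : Fin B.card => σ (e x).1) := by
          intro x y hxy
          exact e.injective (Subtype.ext (hinj hxy))
        have hIH := ih (a + 1) b B.card _ hσ' (by omega) hBc
        rcases hIH with ⟨τ'', hτ''m, hτ''inc⟩ | ⟨τ', hτ'm, hτ'anti⟩
        · refine Or.inl ⟨fun x => (e (τ'' x)).1, ?_, ?_⟩
          · intro x y hxy
            exact e.strictMono (hτ''m hxy)
          · intro x y hxy
            exact hτ''inc hxy
        · refine Or.inr ⟨Fin.cases i₀ (fun x => (e (τ' x)).1), ?_, ?_⟩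
          · intro x y hxy
            induction y using Fin.cases with
            | zero => exact absurd hxy (Fin.not_lt_zero x).elim
            | succ y =>
              induction x using Fin.cases with
              | zero =>
                simp only [Fin.cases_zero, Fin.cases_succ]
                exact hi₀lt (ne_of_gt (Finset.mem_filter.1 (e (τ' y)).2).2)
              | succ x =>
                simp only [Fin.cases_succ]
                exact e.strictMono (hτ'm (Fin.succ_lt_succ_iff.1 hxy))
          · intro x y hxy
            induction y using Fin.cases with
            | zero => exact absurd hxy (Fin.not_lt_zero x).elim
            | succ y =>
              induction x using Fin.cases with
              | zero =>
                simp only [Function.comp_apply, Fin.cases_zero, Fin.cases_succ]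
                exact (Finset.mem_filter.1 (e (τ' y)).2).2
              | succ x =>
                simp only [Function.comp_apply, Fin.cases_succ]
                exact hτ'anti (Fin.succ_lt_succ_iff.1 hxy)

end Stage4

section Stage5
set_option linter.unusedSectionVars false
set_option maxHeartbeats 1000000
namespace MDigraph
variable {α : Type} [DecidableEq α]

lemma single_terminal (D : MDigraph α) {r s : α} {k : ℕ} (hr : r ∈ D.verts)
    (hpaths : D.HasArcDisjointPaths r s k)
    (q m : ℕ) (C : Fin m → List α)
    (hcyc : ∀ i, D.IsDicycle (C i))
    (hess : ∀ i, D.IsEssential r s k (C i))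
    (hdisj : ∀ i j, i ≠ j → ∀ x ∈ C i, x ∉ C j)
    (hm : q * (k + 1) ≤ m) :
    ∃ g : Fin q → Fin m, Function.Injective g ∧
      D.IsOrderedSeq r s k (fun x => C (g x)) := by
  classical
  rcases Nat.eq_zero_or_pos q with rfl | hq
  · exact ⟨Fin.elim0, fun x => x.elim0, Fin.elim0, fun x => x.elim0, fun x => x.elim0,
      fun x => x.elim0, fun x => x.elim0⟩
  have hmpos : 0 < m := by
    have : 1 * (k + 1) ≤ q * (k + 1) := Nat.mul_le_mul_right _ hq
    omega
  -- normalized tight splitting cuts for each cycle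
  have hW : ∀ i : Fin m, ∃ W ∈ D.tightSet r s k, ProperlyIntersects W (C i) := by
    intro i
    obtain ⟨W, hWt, ⟨⟨x, hxc, hxW⟩, ⟨y, hyc, hyW⟩⟩⟩ := hess i
    refine ⟨W ∩ D.verts, tight_inter_verts hWt hr, ⟨x, hxc, Finset.mem_inter.2
      ⟨hxW, mem_verts_of_mem_dicycle D (hcyc i) hxc⟩⟩, ⟨y, hyc, fun hc =>
      hyW (Finset.mem_inter.1 hc).1⟩⟩
  have hne : (D.tightSet r s k).Nonempty := by
    obtain ⟨W, hWmem, _⟩ := hW ⟨0, hmpos⟩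
    exact ⟨W, hWmem⟩
  have hXmem : (D.tightSet r s k).sup' hne id ∈ D.tightSet r s k :=
    sup'_mem_tightSet D hpaths hne (le_refl _)
  have hMmem : (D.tightSet r s k).inf' hne id ∈ D.tightSet r s k :=
    inf'_mem_tightSet D hpaths hne (le_refl _)
  have hMle : ∀ U ∈ D.tightSet r s k, (D.tightSet r s k).inf' hne id ⊆ U :=
    fun U hU => Finset.inf'_le id hU
  have hleX : ∀ U ∈ D.tightSet r s k, U ⊆ (D.tightSet r s k).sup' hne id :=
    fun U hU => Finset.le_sup' id hU
  obtain ⟨l, hlne, hlhead, hllast, hlmem, hlchain⟩ :=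
    exists_saturated_chain_aux (D.tightSet r s k) _ hleX hXmem _ hMmem
  set L := l.length with hL
  have hLpos : 0 < L := List.length_pos_iff.2 hlne
  set P : ℕ → Finset α := fun p => l.getD p ∅ with hP
  have hPeq : ∀ p (hp : p < L), P p = l[p] := fun p hp => List.getD_eq_getElem l ∅ hp
  have hPmem : ∀ p, p < L → P p ∈ D.tightSet r s k := by
    intro p hp
    rw [hPeq p hp]
    exact hlmem _ (List.getElem_mem hp)
  have hP0 : P 0 = (D.tightSet r s k).inf' hne id := by
    rw [hPeq 0 hLpos]
    cases l with
    | nil => exact absurd rfl hlne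
    | cons T rest =>
      simp only [List.head?_cons, Option.some.injEq] at hlhead
      simpa using hlhead
  have hPlast : P (L - 1) = (D.tightSet r s k).sup' hne id := by
    have h1 : L - 1 < L := by omega
    rw [hPeq _ h1]
    rw [List.getLast?_eq_getElem?, List.getElem?_eq_getElem h1] at hllast
    exact (Option.some.inj hllast)
  have hmono : ∀ p1 p2, p1 < p2 → p2 < L → P p1 ⊂ P p2 := by
    have hpair : List.Pairwise (· ⊂ ·) l :=
      List.isChain_iff_pairwise.1 (hlchain.imp (fun A B h => h.1))
    intro p1 p2 h12 h2
    have h1 : p1 < L := lt_trans h12 h2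
    rw [hPeq _ h1, hPeq _ h2]
    exact List.pairwise_iff_getElem.1 hpair p1 p2 h1 h2 h12
  have hmono' : ∀ p1 p2, p1 ≤ p2 → p2 < L → P p1 ⊆ P p2 := by
    intro p1 p2 h12 h2
    rcases Nat.eq_or_lt_of_le h12 with rfl | h
    · exact Finset.Subset.refl _
    · exact subset_of_ssubset (hmono p1 p2 h h2)
  have hnobet : ∀ p, p + 1 < L →
      ¬ ∃ Z ∈ D.tightSet r s k, P p ⊂ Z ∧ Z ⊂ P (p + 1) := by
    have hcg := List.isChain_iff_getElem.1 hlchain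
    intro p hp
    have h1 : p < L - 1 := by omega
    have h2 := hcg p hp
    have hplt : p < L := by omega
    rw [hPeq _ hplt, hPeq _ hp]
    simpa [List.get_eq_getElem] using h2.2
  -- every cycle is split by some chain element
  have hsplit_ex : ∀ i : Fin m, ∃ p, p < L ∧ ProperlyIntersects (P p) (C i) := by
    intro i
    by_contra hcon
    push_neg at hcon
    obtain ⟨W, hWmem, hWsplit⟩ := hW i
    have hIO : ∀ p, p < L → (∀ x ∈ C i, x ∈ P p) ∨ (∀ x ∈ C i, x ∉ P p) := by
      intro p hp
      have h1 := hcon p hp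
      unfold ProperlyIntersects at h1
      push_neg at h1
      by_cases h2 : ∃ x ∈ C i, x ∈ P p
      · exact Or.inl (h1 h2)
      · push_neg at h2
        exact Or.inr h2
    obtain ⟨x, hxc, hxW⟩ := hWsplit.1
    obtain ⟨y, hyc, hyW⟩ := hWsplit.2
    have hIn_last : ∀ z ∈ C i, z ∈ P (L - 1) := by
      rcases hIO (L - 1) (by omega) with h | h
      · exact h
      · exact absurd (hleX W hWmem hxW) (hPlast ▸ h x hxc)
    set IN := (Finset.range L).filter (fun p => ∀ z ∈ C i, z ∈ P p) with hIN
    have hINne : IN.Nonempty := ⟨L - 1, Finset.mem_filter.2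
      ⟨Finset.mem_range.2 (by omega), hIn_last⟩⟩
    set j0 := IN.min' hINne with hj0
    have hj0mem := Finset.min'_mem IN hINne
    have hj0lt : j0 < L := Finset.mem_range.1 (Finset.mem_filter.1 hj0mem).1
    have hj0in : ∀ z ∈ C i, z ∈ P j0 := (Finset.mem_filter.1 hj0mem).2
    have hj0pos : 0 < j0 := by
      rcases Nat.eq_zero_or_pos j0 with h0 | h
      · exfalso
        refine hyW ?_
        have hy2 := hj0in y hyc
        rw [h0, hP0] at hy2
        exact hMle W hWmem hy2
      · exact h
    have hpred_lt : j0 - 1 < L := by omega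
    have hpred_out : ∀ z ∈ C i, z ∉ P (j0 - 1) := by
      rcases hIO (j0 - 1) hpred_lt with h | h
      · exfalso
        have hmem2 : j0 - 1 ∈ IN := Finset.mem_filter.2 ⟨Finset.mem_range.2 hpred_lt, h⟩
        have := Finset.min'_le IN _ hmem2
        omega
      · exact h
    have hTmem : P (j0 - 1) ∈ D.tightSet r s k := hPmem _ hpred_lt
    have hT'mem : P j0 ∈ D.tightSet r s k := hPmem _ hj0lt
    have hWT' : W ∩ P j0 ∈ D.tightSet r s k := by
      refine mem_tightSet.2 ⟨?_, (tight_inter_union D hpaths (mem_tightSet.1 hWmem).2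
        (mem_tightSet.1 hT'mem).2).1⟩
      exact subset_trans Finset.inter_subset_left (mem_tightSet.1 hWmem).1
    have hZmem : P (j0 - 1) ∪ (W ∩ P j0) ∈ D.tightSet r s k := by
      refine mem_tightSet.2 ⟨?_, (tight_inter_union D hpaths (mem_tightSet.1 hTmem).2
        (mem_tightSet.1 hWT').2).2⟩
      exact Finset.union_subset (mem_tightSet.1 hTmem).1 (mem_tightSet.1 hWT').1
    have hj0eq : j0 - 1 + 1 = j0 := by omega
    refine hnobet (j0 - 1) (by omega) ⟨P (j0 - 1) ∪ (W ∩ P j0), hZmem, ?_, ?_⟩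
    · rw [Finset.ssubset_def]
      constructor
      · exact Finset.subset_union_left
      · intro hcontra
        have hx1 : x ∈ P (j0 - 1) ∪ (W ∩ P j0) :=
          Finset.mem_union_right _ (Finset.mem_inter.2 ⟨hxW, hj0in x hxc⟩)
        exact hpred_out x hxc (hcontra hx1)
    · rw [hj0eq, Finset.ssubset_def]
      constructor
      · refine Finset.union_subset ?_ Finset.inter_subset_right
        exact hmono' (j0 - 1) j0 (by omega) hj0lt
      · intro hcontra
        have hy1 : y ∈ P j0 := hj0in y hyc
        have hy2 := hcontra hy1
        rcases Finset.mem_union.1 hy2 with h | h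
        · exact hpred_out y hyc h
        · exact hyW (Finset.mem_inter.1 h).1
  -- split-interval endpoints
  have hSPne : ∀ i : Fin m,
      ((Finset.range L).filter (fun p => ProperlyIntersects (P p) (C i))).Nonempty := by
    intro i
    obtain ⟨p, hp, hsp⟩ := hsplit_ex i
    exact ⟨p, Finset.mem_filter.2 ⟨Finset.mem_range.2 hp, hsp⟩⟩
  set SP : Fin m → Finset ℕ :=
    fun i => (Finset.range L).filter (fun p => ProperlyIntersects (P p) (C i)) with hSP
  set a : Fin m → ℕ := fun i => (SP i).min' (hSPne i) with ha
  set b : Fin m → ℕ := fun i => (SP i).max' (hSPne i) with hb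
  have hb_lt : ∀ i, b i < L := by
    intro i
    exact Finset.mem_range.1 (Finset.mem_filter.1 (Finset.max'_mem _ (hSPne i))).1
  have ha_le_b : ∀ i, a i ≤ b i :=
    fun i => Finset.min'_le _ _ (Finset.max'_mem _ (hSPne i))
  have ha_lt : ∀ i, a i < L := fun i => lt_of_le_of_lt (ha_le_b i) (hb_lt i)
  have ha_split : ∀ i, ProperlyIntersects (P (a i)) (C i) :=
    fun i => (Finset.mem_filter.1 (Finset.min'_mem _ (hSPne i))).2
  have hb_split : ∀ i, ProperlyIntersects (P (b i)) (C i) :=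
    fun i => (Finset.mem_filter.1 (Finset.max'_mem _ (hSPne i))).2
  have hmid : ∀ i p, a i ≤ p → p ≤ b i → ProperlyIntersects (P p) (C i) := by
    intro i p h1 h2
    have hpL : p < L := lt_of_le_of_lt h2 (hb_lt i)
    constructor
    · obtain ⟨x, hxc, hxin⟩ := (ha_split i).1
      exact ⟨x, hxc, hmono' (a i) p h1 hpL hxin⟩
    · by_contra hcon
      push_neg at hcon
      obtain ⟨y, hyc, hynot⟩ := (hb_split i).2
      exact hynot (hmono' p (b i) h2 (hb_lt i) (hcon y hyc))
  have hdepth : ∀ p : ℕ,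
      ((Finset.univ : Finset (Fin m)).filter (fun i => a i ≤ p ∧ p ≤ b i)).card ≤ k := by
    intro p
    rcases Finset.eq_empty_or_nonempty
      ((Finset.univ : Finset (Fin m)).filter (fun i => a i ≤ p ∧ p ≤ b i)) with he | hne'
    · rw [he]; simp
    · obtain ⟨i1, hi1⟩ := hne'
      have hpL : p < L := lt_of_le_of_lt (Finset.mem_filter.1 hi1).2.2 (hb_lt i1)
      refine card_splits_le D (mem_tightSet.1 (hPmem p hpL)).2 _ C
        (fun i _ => hcyc i) (fun i _ j _ hij => hdisj i j hij) ?_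
      intro i hi
      exact hmid i p (Finset.mem_filter.1 hi).2.1 (Finset.mem_filter.1 hi).2.2
  obtain ⟨f, hfmem, hfchain⟩ := exists_interval_chain k a b q Finset.univ hdepth
    (by simpa using hm)
  refine ⟨f, ?_, ?_⟩
  · intro x y hfe
    by_contra hxy
    have hab1 : a (f x) = a (f y) := by rw [hfe]
    have hab2 : b (f x) = b (f y) := by rw [hfe]
    have h2 := ha_le_b (f x)
    have h3 := ha_le_b (f y)
    rcases Ne.lt_or_gt hxy with hlt | hlt
    · have h1 := hfchain x y hlt
      omega
    · have h1 := hfchain y x hlt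
      omega
  · refine ⟨fun x => P (a (f x)), ?_, ?_, ?_, ?_⟩
    · intro x
      exact (mem_tightSet.1 (hPmem _ (ha_lt (f x)))).2
    · intro x y hxy z hz
      have hch := hfchain x y hxy
      have hnot : ¬ ProperlyIntersects (P (a (f y))) (C (f x)) := by
        intro hsp
        have hmem2 : a (f y) ∈ SP (f x) :=
          Finset.mem_filter.2 ⟨Finset.mem_range.2 (ha_lt (f y)), hsp⟩
        have hle9 : a (f y) ≤ b (f x) := Finset.le_max' _ _ hmem2
        omega
      obtain ⟨x0, hx0c, hx0in⟩ := (hb_split (f x)).1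
      have hmem0 : x0 ∈ P (a (f y)) :=
        hmono' (b (f x)) (a (f y)) (le_of_lt hch) (ha_lt (f y)) hx0in
      unfold ProperlyIntersects at hnot
      push_neg at hnot
      exact hnot ⟨x0, hx0c, hmem0⟩ z hz
    · intro x y hyx z hz hzin
      have hch := hfchain y x hyx
      have hlt2 : a (f y) < a (f x) := lt_of_le_of_lt (ha_le_b (f y)) hch
      have hnot : ¬ ProperlyIntersects (P (a (f y))) (C (f x)) := by
        intro hsp
        have hmem2 : a (f y) ∈ SP (f x) :=
          Finset.mem_filter.2 ⟨Finset.mem_range.2 (lt_trans hlt2 (ha_lt (f x))), hsp⟩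
        have hle9 : a (f x) ≤ a (f y) := Finset.min'_le _ _ hmem2
        omega
      unfold ProperlyIntersects at hnot
      push_neg at hnot
      have hall : ∀ w ∈ C (f x), w ∈ P (a (f y)) := hnot ⟨z, hz, hzin⟩
      obtain ⟨y0, hy0c, hy0not⟩ := (ha_split (f x)).2
      exact hy0not (subset_of_ssubset (hmono _ _ hlt2 (ha_lt (f x))) (hall y0 hy0c))
    · intro x
      exact ha_split (f x)

end MDigraph
end Stage5

section Stage6
set_option linter.unusedSectionVars false
namespace MDigraph
variable {α : Type} [DecidableEq α]

lemma IsOrderedSeq.comp_strictMono {D : MDigraph α} {r s : α} {k : ℕ} {n q : ℕ}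
    {E : Fin n → List α} (h : D.IsOrderedSeq r s k E) {τ : Fin q → Fin n}
    (hτ : StrictMono τ) : D.IsOrderedSeq r s k (fun x => E (τ x)) := by
  obtain ⟨U, hU1, hU2, hU3, hU4⟩ := h
  exact ⟨fun x => U (τ x), fun i => hU1 _, fun i j hij => hU2 _ _ (hτ hij),
    fun i j hij => hU3 _ _ (hτ hij), fun i => hU4 _⟩

lemma strictMono_of_anti_rev {n q : ℕ} {h : Fin q → Fin n} (hanti : StrictAnti h) :
    StrictMono (fun x : Fin q => h x.rev) :=
  fun x y hxy => hanti (Fin.rev_lt_rev.2 hxy)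

lemma strictMono_rev_of_anti {n q : ℕ} {h : Fin q → Fin n} (hanti : StrictAnti h) :
    StrictMono (fun x : Fin q => (h x).rev) :=
  fun x y hxy => Fin.rev_lt_rev.2 (hanti hxy)

lemma strictMono_rev_comp_rev {n q : ℕ} {h : Fin q → Fin n} (hmono : StrictMono h) :
    StrictMono (fun x : Fin q => (h x.rev).rev) :=
  fun x y hxy => Fin.rev_lt_rev.2 (hmono (Fin.rev_lt_rev.2 hxy))

/-- The bound function for the main theorem. -/
def boundF (k : ℕ) : ℕ → ℕ → ℕ
  | 0, q => q
  | j + 1, q => boundF k j (2 ^ (q + q) * (k + 1))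

lemma multi_terminal (D : MDigraph α) {r : α} {k : ℕ} (hr : r ∈ D.verts) :
    ∀ (j : ℕ) (S' : Finset α), S'.card = j →
      (∀ s ∈ S', D.HasArcDisjointPaths r s k) →
      ∀ (q m : ℕ) (C : Fin m → List α),
        (∀ i, D.IsDicycle (C i)) →
        (∀ i, ∀ s ∈ S', D.IsEssential r s k (C i)) →
        (∀ i j', i ≠ j' → ∀ x ∈ C i, x ∉ C j') →
        boundF k j q ≤ m →
        ∃ g : Fin q → Fin m, Function.Injective g ∧
          ∀ s ∈ S', D.IsOrderedSeq r s k (fun x => C (g x)) ∨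
            D.IsOrderedSeq r s k (fun x => C (g x.rev)) := by
  intro j
  induction j with
  | zero =>
    intro S' hcard _ q m C _ _ _ hm
    have hS' : S' = ∅ := Finset.card_eq_zero.1 hcard
    subst hS'
    have hqm : q ≤ m := by simpa [boundF] using hm
    exact ⟨Fin.castLE hqm, Fin.castLE_injective hqm, fun s hs => absurd hs (by simp)⟩
  | succ j ih =>
    intro S' hcard hpaths q m C hcyc hess hdisj hm
    have hS'ne : S'.Nonempty := Finset.card_pos.1 (by omega)
    obtain ⟨s₀, hs₀⟩ := hS'ne
    have hcard'' : (S'.erase s₀).card = j := by rw [Finset.card_erase_of_mem hs₀, hcard]; omega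
    have hm' : boundF k j (2 ^ (q + q) * (k + 1)) ≤ m := by
      have heq : boundF k (j + 1) q = boundF k j (2 ^ (q + q) * (k + 1)) := rfl
      omega
    obtain ⟨g₁, hg₁inj, hg₁good⟩ := ih (S'.erase s₀) hcard''
      (fun s hs => hpaths s (Finset.mem_of_mem_erase hs))
      (2 ^ (q + q) * (k + 1)) m C hcyc
      (fun i s hs => hess i s (Finset.mem_of_mem_erase hs)) hdisj hm'
    obtain ⟨σ, hσinj, hσord⟩ := single_terminal D hr (hpaths s₀ hs₀)
      (2 ^ (q + q)) (2 ^ (q + q) * (k + 1)) (fun x => C (g₁ x))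
      (fun i => hcyc _) (fun i => hess _ s₀ hs₀)
      (fun i j' hij x hx => hdisj _ _ (fun h => hij (hg₁inj h)) x hx)
      (le_refl _)
    obtain hτor := exists_mono_or_anti (q + q) q q (2 ^ (q + q)) σ hσinj (le_refl _)
      (le_refl _)
    rcases hτor with ⟨τ', hτ'm, hτ'inc⟩ | ⟨τ', hτ'm, hτ'anti⟩
    · -- σ ∘ τ' strictly monotone
      have hhmono : StrictMono (fun x : Fin q => σ (τ' x)) := hτ'inc
      refine ⟨fun x => g₁ (σ (τ' x)), hg₁inj.comp hhmono.injective, ?_⟩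
      intro s hs
      by_cases heq : s = s₀
      · subst heq
        exact Or.inl (hσord.comp_strictMono hτ'm)
      · rcases hg₁good s (Finset.mem_erase.2 ⟨heq, hs⟩) with hord | hord
        · exact Or.inl (hord.comp_strictMono hhmono)
        · right
          have hρ : StrictMono (fun x : Fin q => (σ (τ' x.rev)).rev) :=
            strictMono_rev_comp_rev hhmono
          have := hord.comp_strictMono hρ
          simpa [Fin.rev_rev] using this
    · -- σ ∘ τ' strictly antitone
      have hhanti : StrictAnti (fun x : Fin q => σ (τ' x)) := hτ'anti
      have hh₂ : StrictMono (fun x : Fin q => σ (τ' x.rev)) :=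
        strictMono_of_anti_rev hhanti
      refine ⟨fun x => g₁ (σ (τ' x.rev)), hg₁inj.comp hh₂.injective, ?_⟩
      intro s hs
      by_cases heq : s = s₀
      · subst heq
        right
        have := hσord.comp_strictMono hτ'm
        simpa [Fin.rev_rev] using this
      · rcases hg₁good s (Finset.mem_erase.2 ⟨heq, hs⟩) with hord | hord
        · exact Or.inl (hord.comp_strictMono hh₂)
        · right
          have hρ : StrictMono (fun x : Fin q => (σ (τ' x)).rev) :=
            strictMono_rev_of_anti hhanti
          have := hord.comp_strictMono hρ
          simpa [Fin.rev_rev] using this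

end MDigraph
end Stage6


/-- For all positive integers `q`, `k` and `t` there is a constant
`N` such that: in every Steiner rooted `k`-arc-connected directed graph with root `r`
and `t` terminals `S`, every family of at least `N` pairwise vertex-disjoint directed
cycles, each `s`-essential for every `s ∈ S`, contains `q` cycles such that for every
`s ∈ S` either this sequence or its reverse is `s`-ordered. -/
theorem ordered_cycles_many_terminals (q k t : ℕ) (hq : 0 < q) (hk : 0 < k)
    (ht : 0 < t) :
    ∃ N : ℕ, ∀ (α : Type) [DecidableEq α] (D : MDigraph α) (r : α) (S : Finset α),
      r ∉ S → S.card = t → r ∈ D.verts → ↑S ⊆ (D.verts : Set α) →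
      D.SteinerRooted r S k →
      ∀ (m : ℕ) (C : Fin m → List α),
        N ≤ m →
        (∀ i, D.IsDicycle (C i)) →
        (∀ i, ∀ s ∈ S, D.IsEssential r s k (C i)) →
        (∀ i j, i ≠ j → ∀ x ∈ C i, x ∉ C j) →
        ∃ g : Fin q → Fin m, Function.Injective g ∧
          ∀ s ∈ S,
            D.IsOrderedSeq r s k (fun i => C (g i)) ∨
            D.IsOrderedSeq r s k (fun i => C (g i.rev)) := by
  
  refine ⟨MDigraph.boundF k t q, ?_⟩
  intro α _ D r S hrS hScard hrv hSv hSteiner m C hm hcyc hess hdis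
  obtain ⟨g, hginj, hgood⟩ := MDigraph.multi_terminal D hrv t S hScard
    (fun s hs => hSteiner s hs) q m C hcyc (fun i s hs => hess i s hs) hdis hm
  exact ⟨g, hginj, fun s hs => hgood s hs⟩
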